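/- For all sets C and B, the set functor F defined by FX = C + B × X on sets and Ff = id_C + id_B × f on functions admits exactly one normal lax extension: there is a normal lax extension of F, and any two normal lax extensions of F are equal. -/

import Mathlib

open CategoryTheory Function

universe u

/-- Applicative composition of relations: `relComp s r = s · r`. -/
def relComp {X Y Z : Type u} (s : Y → Z → Prop) (r : X → Y → Prop) : X → Z → Prop :=
  fun x z => ∃ y, r x y ∧ s y z

/-- Converse of a relation. -/
def relConv {X Y : Type u} (r : X → Y → Prop) : Y → X → Prop := fun y x => r x y

/-- Graph relation of a function. -/
def fgraph {X Y : Type u} (f : X → Y) : X → Y → Prop := fun x y => f x = y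

/-- An `F`-relator: a monotone assignment of relations `F X ⇸ F Y` to relations `X ⇸ Y`. -/
structure Relator (F : Type u ⥤ Type u) : Type (u + 1) where
  map : ∀ {X Y : Type u}, (X → Y → Prop) → (F.obj X → F.obj Y → Prop)
  mono : ∀ {X Y : Type u} {r s : X → Y → Prop}, (∀ x y, r x y → s x y) →
    ∀ u v, map r u v → map s u v

/-- `f` is a coalgebra homomorphism from `(X, α)` to `(Y, β)`. -/
def IsCoalgHom (F : Type u ⥤ Type u) {X Y : Type u} (α : X → F.obj X) (β : Y → F.obj Y)
    (f : X → Y) : Prop :=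
  ∀ x, β (f x) = F.map (TypeCat.ofHom f) (α x)

/-- Behavioural equivalence of states. -/
def BehEq (F : Type u ⥤ Type u) {X Y : Type u} (α : X → F.obj X) (β : Y → F.obj Y)
    (x : X) (y : Y) : Prop :=
  ∃ (Z : Type u) (γ : Z → F.obj Z) (f : X → Z) (g : Y → Z),
    IsCoalgHom F α γ f ∧ IsCoalgHom F β γ g ∧ f x = g y

/-- `r` is a `Λ`-simulation from `(X, α)` to `(Y, β)`: `r ≤ β° · Λr · α`. -/
def IsSimulation {F : Type u ⥤ Type u} (Λ : Relator F) {X Y : Type u}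
    (α : X → F.obj X) (β : Y → F.obj Y) (r : X → Y → Prop) : Prop :=
  ∀ x y, r x y → Λ.map r (α x) (β y)

/-- `x` and `y` are `Λ`-similar: related by some `Λ`-simulation. -/
def Similar' {F : Type u ⥤ Type u} (Λ : Relator F) {X Y : Type u}
    (α : X → F.obj X) (β : Y → F.obj Y) (x : X) (y : Y) : Prop :=
  ∃ r, IsSimulation Λ α β r ∧ r x y

/-- `Λ` is a relax extension of `F`: `Ff ≤ Λf` and `(Ff)° ≤ Λ(f°)` for all functions `f`. -/
def IsRelaxExtension (F : Type u ⥤ Type u) (Λ : Relator F) : Prop :=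
  ∀ {X Y : Type u} (f : X → Y),
    (∀ (u : F.obj X) (v : F.obj Y), F.map (TypeCat.ofHom f) u = v → Λ.map (fgraph f) u v) ∧
    (∀ (v : F.obj Y) (u : F.obj X), F.map (TypeCat.ofHom f) u = v → Λ.map (relConv (fgraph f)) v u)

/-- `Λ` is a lax extension of `F`: a relax extension with `Λs · Λr ≤ Λ(s · r)`. -/
def IsLaxExtension (F : Type u ⥤ Type u) (Λ : Relator F) : Prop :=
  IsRelaxExtension F Λ ∧
    ∀ {X Y Z : Type u} (r : X → Y → Prop) (s : Y → Z → Prop)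
      (u : F.obj X) (w : F.obj Z),
      relComp (Λ.map s) (Λ.map r) u w → Λ.map (relComp s r) u w

/-- `Λ` is normal: `Λ1_X = 1_{FX}` for every set `X`. -/
def IsNormal (F : Type u ⥤ Type u) (Λ : Relator F) : Prop :=
  ∀ (X : Type u) (u v : F.obj X), Λ.map (@Eq X) u v ↔ u = v

/-- The functor `X ↦ C + B × X`, `f ↦ id_C + id_B × f`. -/
def machineFunctor (C B : Type u) : Type u ⥤ Type u where
  obj X := C ⊕ B × X
  map f := TypeCat.ofHom (Sum.map id (Prod.map id f))
  map_id := by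
    intro X
    ext x
    cases x <;> rfl
  map_comp := by
    intro X Y Z f g
    ext x
    cases x <;> rfl

section Aux

variable {F : Type u ⥤ Type u} {Λ : Relator F}

/-- In a normal lax extension, `Λf ≤ Ff`. -/
lemma graph_le (hl : IsLaxExtension F Λ) (hn : IsNormal F Λ)
    {X Y : Type u} (f : X → Y) (u : F.obj X) (v : F.obj Y)
    (h : Λ.map (fgraph f) u v) : F.map (TypeCat.ofHom f) u = v := by
  have h1 : Λ.map (relConv (fgraph f)) (F.map (TypeCat.ofHom f) u) u := (hl.1 f).2 (F.map (TypeCat.ofHom f) u) u rfl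
  have h2 : Λ.map (relComp (fgraph f) (relConv (fgraph f))) (F.map (TypeCat.ofHom f) u) v :=
    hl.2 _ _ _ _ ⟨u, h1, h⟩
  have h3 : Λ.map (@Eq Y) (F.map (TypeCat.ofHom f) u) v := by
    refine Λ.mono (fun y y' hy => ?_) _ _ h2
    obtain ⟨x, hx, hx'⟩ := hy
    exact hx.symm.trans hx'
  exact (hn Y _ _).1 h3

/-- Cospan upper bound: if `r ≤ g° · f` then `Λr u v → Ff u = Fg v`. -/
lemma cospan_le (hl : IsLaxExtension F Λ) (hn : IsNormal F Λ)
    {X Y Z : Type u} (r : X → Y → Prop) (f : X → Z) (g : Y → Z)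
    (hr : ∀ x y, r x y → f x = g y) {u : F.obj X} {v : F.obj Y}
    (h : Λ.map r u v) : F.map (TypeCat.ofHom f) u = F.map (TypeCat.ofHom g) v := by
  have hg : Λ.map (fgraph g) v (F.map (TypeCat.ofHom g) v) := (hl.1 g).1 v _ rfl
  have h2 : Λ.map (relComp (fgraph g) r) u (F.map (TypeCat.ofHom g) v) := hl.2 _ _ _ _ ⟨v, h, hg⟩
  have h3 : Λ.map (fgraph f) u (F.map (TypeCat.ofHom g) v) := by
    refine Λ.mono (fun x z hz => ?_) _ _ h2
    obtain ⟨y, hxy, hgz⟩ := hz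
    exact (hr x y hxy).trans hgz
  exact graph_le hl hn f u _ h3

/-- Span lower bound: a witness in `F R` over the graph of `r` forces `Λr u v`. -/
lemma span_le (hl : IsLaxExtension F Λ)
    {X Y : Type u} (r : X → Y → Prop) (u : F.obj X) (v : F.obj Y)
    (w : F.obj {p : X × Y // r p.1 p.2})
    (hu : F.map (TypeCat.ofHom (fun p : {p : X × Y // r p.1 p.2} => p.1.1)) w = u)
    (hv : F.map (TypeCat.ofHom (fun p : {p : X × Y // r p.1 p.2} => p.1.2)) w = v) :
    Λ.map r u v := by
  have h1 : Λ.map (relConv (fgraph (fun p : {p : X × Y // r p.1 p.2} => p.1.1))) u w :=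
    (hl.1 _).2 u w hu
  have h2 : Λ.map (fgraph (fun p : {p : X × Y // r p.1 p.2} => p.1.2)) w v :=
    (hl.1 _).1 w v hv
  have h3 := hl.2 _ _ u v ⟨w, h1, h2⟩
  refine Λ.mono (fun x y hxy => ?_) _ _ h3
  obtain ⟨z, hz1, hz2⟩ := hxy
  have := z.2
  rw [show z.1.1 = x from hz1, show z.1.2 = y from hz2] at this
  exact this

end Aux

/-- The Barr extension of the machine functor. -/
def barr (C B : Type u) : Relator (machineFunctor C B) where
  map r u v :=
    match u, v with
    | Sum.inl c, Sum.inl c' => c = c'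
    | Sum.inr (b, x), Sum.inr (b', y) => b = b' ∧ r x y
    | _, _ => False
  mono h u v := by
    rcases u with c | ⟨b, x⟩ <;> rcases v with c' | ⟨b', y⟩
    · exact fun hc => hc
    · exact fun hc => hc.elim
    · exact fun hc => hc.elim
    · exact fun hc => ⟨hc.1, h _ _ hc.2⟩

lemma barr_lax (C B : Type u) : IsLaxExtension (machineFunctor C B) (barr C B) := by
  constructor
  · intro X Y f
    constructor
    · intro u v huv
      subst huv
      rcases u with c | ⟨b, x⟩
      · exact rfl
      · exact ⟨rfl, rfl⟩
    · intro v u huv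
      subst huv
      rcases u with c | ⟨b, x⟩
      · exact rfl
      · exact ⟨rfl, rfl⟩
  · intro X Y Z r s u w huw
    obtain ⟨v, h1, h2⟩ := huw
    rcases u with c | ⟨b, x⟩ <;> rcases v with c' | ⟨b', y⟩ <;>
      rcases w with c'' | ⟨b'', z⟩ <;> try exact h1.elim
    · exact (h1 : c = c').trans (h2 : c' = c'')
    · exact h2.elim
    · exact h2.elim
    · exact ⟨h1.1.trans h2.1, y, h1.2, h2.2⟩

lemma barr_normal (C B : Type u) : IsNormal (machineFunctor C B) (barr C B) := by
  intro X u v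
  rcases u with c | ⟨b, x⟩ <;> rcases v with c' | ⟨b', y⟩
  · constructor
    · exact fun hc => congrArg Sum.inl (show c = c' from hc)
    · exact fun hc => Sum.inl.inj hc
  · exact ⟨fun hc => hc.elim, fun hc => by simp at hc⟩
  · exact ⟨fun hc => hc.elim, fun hc => by simp at hc⟩
  · constructor
    · rintro ⟨hb, hxy⟩; rw [hb, hxy]
    · exact fun hc => ⟨congrArg Prod.fst (Sum.inr.inj hc),
        congrArg Prod.snd (Sum.inr.inj hc)⟩

/-- Characterization of any normal lax extension of the machine functor. -/
lemma machine_char {C B : Type u} {Λ : Relator (machineFunctor C B)}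
    (hl : IsLaxExtension (machineFunctor C B) Λ) (hn : IsNormal (machineFunctor C B) Λ)
    (X Y : Type u) (r : X → Y → Prop)
    (u : (machineFunctor C B).obj X) (v : (machineFunctor C B).obj Y) :
    Λ.map r u v ↔ (barr C B).map r u v := by
  constructor
  · intro h
    have hc := cospan_le hl hn r (fun _ => PUnit.unit.{u+1}) (fun _ => PUnit.unit)
      (fun _ _ _ => rfl) h
    rcases u with c | ⟨b, x⟩ <;> rcases v with c' | ⟨b', y⟩
    · -- inl / inl
      exact Sum.inl.inj (show (Sum.inl c : C ⊕ B × PUnit.{u+1}) = Sum.inl c' from hc)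
    · exact Sum.inl_ne_inr
        (show (Sum.inl c : C ⊕ B × PUnit.{u+1}) = Sum.inr (b', PUnit.unit) from hc)
    · exact Sum.inr_ne_inl
        (show (Sum.inr (b, PUnit.unit) : C ⊕ B × PUnit.{u+1}) = Sum.inl c' from hc)
    · -- inr / inr
      have hc' : (Sum.inr (b, PUnit.unit) : C ⊕ B × PUnit.{u+1})
          = Sum.inr (b', PUnit.unit) := hc
      have hb : b = b' := congrArg Prod.fst (Sum.inr.inj hc')
      subst hb
      refine ⟨rfl, ?_⟩
      by_contra hrxy
      have hι : Λ.map (fgraph (fun _ : PUnit => x)) (Sum.inr (b, PUnit.unit)) (Sum.inr (b, x)) :=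
        (hl.1 _).1 _ _ rfl
      have h2 : Λ.map (relComp r (fgraph (fun _ : PUnit => x)))
          (Sum.inr (b, PUnit.unit)) (Sum.inr (b, y)) :=
        hl.2 _ _ _ _ ⟨Sum.inr (b, x), hι, h⟩
      have hκ : Λ.map (relConv (fgraph (fun _ : PUnit => y)))
          (Sum.inr (b, y)) (Sum.inr (b, PUnit.unit)) :=
        (hl.1 _).2 _ _ rfl
      have h3 : Λ.map (relComp (relConv (fgraph (fun _ : PUnit => y)))
            (relComp r (fgraph (fun _ : PUnit => x))))
          (Sum.inr (b, PUnit.unit)) (Sum.inr (b, PUnit.unit)) :=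
        hl.2 _ _ _ _ ⟨Sum.inr (b, y), h2, hκ⟩
      have hempty : ∀ (a c : PUnit.{u+1}),
          relComp (relConv (fgraph (fun _ : PUnit => y)))
            (relComp r (fgraph (fun _ : PUnit => x))) a c →
          (fun _ : PUnit => (ULift.up false : ULift.{u} Bool)) a =
            (fun _ : PUnit => (ULift.up true : ULift.{u} Bool)) c := by
        intro a c hac
        exfalso
        obtain ⟨y0, ⟨x0, hx0, hr0⟩, hy0⟩ := hac
        apply hrxy
        have hx : x = x0 := hx0
        have hy : y = y0 := hy0
        rw [hx, hy]
        exact hr0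
      have hfinal := cospan_le hl hn _ _ _ hempty h3
      have hfinal' : (Sum.inr (b, ULift.up false) : C ⊕ B × ULift.{u} Bool)
          = Sum.inr (b, ULift.up true) := hfinal
      exact Bool.noConfusion (congrArg ULift.down (congrArg Prod.snd (Sum.inr.inj hfinal')))
  · intro h
    rcases u with c | ⟨b, x⟩ <;> rcases v with c' | ⟨b', y⟩
    · have hc : c = c' := h
      subst hc
      exact span_le hl r _ _ (Sum.inl c) rfl rfl
    · exact h.elim
    · exact h.elim
    · obtain ⟨hb, hr⟩ := (h : b = b' ∧ r x y)
      subst hb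
      exact span_le hl r _ _ (Sum.inr (b, ⟨(x, y), hr⟩)) rfl rfl

/-- For all sets `C` and `B`, the functor `FX = C + B × X` admits
exactly one normal lax extension: one exists, and any two are equal. -/
theorem stmt17 (C B : Type u) :
    (∃ Λ : Relator (machineFunctor C B),
      IsLaxExtension (machineFunctor C B) Λ ∧ IsNormal (machineFunctor C B) Λ)
    ∧
    (∀ Λ Λ' : Relator (machineFunctor C B),
      IsLaxExtension (machineFunctor C B) Λ → IsNormal (machineFunctor C B) Λ →
      IsLaxExtension (machineFunctor C B) Λ' → IsNormal (machineFunctor C B) Λ' →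
      ∀ (X Y : Type u) (r : X → Y → Prop)
        (u : (machineFunctor C B).obj X) (v : (machineFunctor C B).obj Y),
        Λ.map r u v ↔ Λ'.map r u v) := by
  refine ⟨⟨barr C B, barr_lax C B, barr_normal C B⟩, ?_⟩
  intro Λ Λ' hl hn hl' hn' X Y r u v
  exact (machine_char hl hn X Y r u v).trans (machine_char hl' hn' X Y r u v).symm
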